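/- Let S be an unsatisfiable system of integer-linear inequalities in n real variables. If S has a Cutting Planes refutation with s inequalities, then S has a pathlike Stabbing Planes refutation with at most s queries. -/

import Mathlib

/-- An integer-linear inequality `a · x ≥ b` in `n` variables. -/
structure LinIneq (n : ℕ) where
  a : Fin n → ℤ
  b : ℤ

/-- The real inner product of an integer vector with a real point. -/
def dotIR {n : ℕ} (a : Fin n → ℤ) (x : Fin n → ℝ) : ℝ := ∑ i, (a i : ℝ) * x i

/-- A real point satisfies the inequality `a · x ≥ b`. -/
def LinIneq.sat {n : ℕ} (L : LinIneq n) (x : Fin n → ℝ) : Prop := dotIR L.a x ≥ (L.b : ℝ)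

/-- The set of real points satisfying every inequality of the system `S`. -/
def polytopeOf {n : ℕ} (S : Set (LinIneq n)) : Set (Fin n → ℝ) := {x | ∀ L ∈ S, L.sat x}

/-- The halfspace `a · x ≤ b - 1`. -/
def leSet {n : ℕ} (a : Fin n → ℤ) (b : ℤ) : Set (Fin n → ℝ) := {x | dotIR a x ≤ (b : ℝ) - 1}

/-- The halfspace `a · x ≥ b`. -/
def geSet {n : ℕ} (a : Fin n → ℤ) (b : ℤ) : Set (Fin n → ℝ) := {x | dotIR a x ≥ (b : ℝ)}

/-- A Stabbing Planes proof tree: internal nodes carry queries `(a, b)`. -/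
inductive SPTree (n : ℕ) where
  | leaf : SPTree n
  | node (a : Fin n → ℤ) (b : ℤ) (l r : SPTree n) : SPTree n

namespace SPTree

variable {n : ℕ}

/-- The number of queries (internal nodes). -/
def size : SPTree n → ℕ
  | .leaf => 0
  | .node _ _ l r => l.size + r.size + 1

/-- The depth of the tree. -/
def depth : SPTree n → ℕ
  | .leaf => 0
  | .node _ _ l r => max l.depth r.depth + 1

/-- The tree is a valid SP refutation of the polytope `P`: at each query the left
child refutes `P ∩ {a·x ≤ b-1}` and the right child refutes `P ∩ {a·x ≥ b}`, and
the polytope associated with every leaf is empty. -/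
def valid : SPTree n → Set (Fin n → ℝ) → Prop
  | .leaf, P => P = ∅
  | .node a b l r, P => l.valid (P ∩ leSet a b) ∧ r.valid (P ∩ geSet a b)

/-- Every query of the tree is pathlike for the polytope at its node. -/
def pathlike : SPTree n → Set (Fin n → ℝ) → Prop
  | .leaf, _ => True
  | .node a b l r, P =>
      (P ∩ leSet a b = ∅ ∨ P ∩ geSet a b = ∅) ∧
      l.pathlike (P ∩ leSet a b) ∧ r.pathlike (P ∩ geSet a b)

end SPTree

/-- `Q` is a face of `P`: `Q = P ∩ {x : a·x = β}` where `a·x ≤ β` holds on all of `P`. -/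
def IsFace {n : ℕ} (P Q : Set (Fin n → ℝ)) : Prop :=
  ∃ (a : Fin n → ℝ) (β : ℝ), (∀ x ∈ P, (∑ i, a i * x i) ≤ β) ∧
    Q = P ∩ {x | (∑ i, a i * x i) = β}

namespace SPTree

variable {n : ℕ}

/-- Every query of the tree is facelike for the polytope at its node. -/
def facelike : SPTree n → Set (Fin n → ℝ) → Prop
  | .leaf, _ => True
  | .node a b l r, P =>
      (P ∩ leSet a b = ∅ ∨ IsFace P (P ∩ leSet a b) ∨
        P ∩ geSet a b = ∅ ∨ IsFace P (P ∩ geSet a b)) ∧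
      l.facelike (P ∩ leSet a b) ∧ r.facelike (P ∩ geSet a b)

/-- All coefficients of all query vectors are bounded by `c` in absolute value. -/
def coeffBound : SPTree n → ℤ → Prop
  | .leaf, _ => True
  | .node a _ l r, c => (∀ i, |a i| ≤ c) ∧ l.coeffBound c ∧ r.coeffBound c

end SPTree

/-- A Cutting Planes refutation of the system `S`: a sequence of integer-linear
inequalities, each an axiom of `S`, a nonnegative integer linear combination of two
earlier ones, or obtained from an earlier one by the division rule; the sequence
ends with `0 ≥ 1`. -/
def IsCPRefutation {n : ℕ} (S : Set (LinIneq n)) (π : List (LinIneq n)) : Prop :=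
  π.getLast? = some ⟨fun _ => 0, 1⟩ ∧
  ∀ i : Fin π.length,
    π.get i ∈ S ∨
    (∃ j k : Fin π.length, (j : ℕ) < (i : ℕ) ∧ (k : ℕ) < (i : ℕ) ∧
      ∃ α β : ℤ, 0 ≤ α ∧ 0 ≤ β ∧
        (∀ t, (π.get i).a t = α * (π.get j).a t + β * (π.get k).a t) ∧
        (π.get i).b = α * (π.get j).b + β * (π.get k).b) ∨
    (∃ j : Fin π.length, (j : ℕ) < (i : ℕ) ∧
      ∃ d : ℤ, 0 < d ∧ (∀ t, (π.get j).a t = d * (π.get i).a t) ∧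
        (π.get i).b = ⌈((π.get j).b : ℚ) / (d : ℚ)⌉)

namespace CPtoSP

variable {n : ℕ}

/-- A path-shaped SP tree following a list of inequalities: at each node the
left child is a leaf and the right child continues. -/
def chain : List (LinIneq n) → SPTree n
  | [] => .leaf
  | L :: rest => .node L.a L.b .leaf (chain rest)

lemma chain_size (l : List (LinIneq n)) : (chain l).size = l.length := by
  induction l with
  | nil => rfl
  | cons L rest ih => simp [chain, SPTree.size, ih]

/-- The semantic condition making `chain l` a valid pathlike refutation of `P`. -/
def goodChain : List (LinIneq n) → Set (Fin n → ℝ) → Prop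
  | [], P => P = ∅
  | L :: rest, P => P ∩ leSet L.a L.b = ∅ ∧ goodChain rest (P ∩ geSet L.a L.b)

lemma chain_valid : ∀ (l : List (LinIneq n)) (P : Set (Fin n → ℝ)),
    goodChain l P → (chain l).valid P
  | [], _, h => h
  | L :: rest, P, h => ⟨h.1, chain_valid rest _ h.2⟩

lemma chain_pathlike : ∀ (l : List (LinIneq n)) (P : Set (Fin n → ℝ)),
    goodChain l P → (chain l).pathlike P
  | [], _, _ => trivial
  | L :: rest, P, h => ⟨Or.inl h.1, trivial, chain_pathlike rest _ h.2⟩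

end CPtoSP

/-- If an unsatisfiable system `S` of integer-linear inequalities in
`n` real variables has a Cutting Planes refutation with `s` inequalities, then `S` has
a pathlike Stabbing Planes refutation with at most `s` queries. -/
theorem cp_to_pathlike_sp {n : ℕ} (S : Set (LinIneq n)) (hfin : S.Finite)
    (hunsat : ¬ ∃ x : Fin n → ℤ, ∀ L ∈ S, L.sat fun i => (x i : ℝ))
    (π : List (LinIneq n)) (hπ : IsCPRefutation S π) :
    ∃ T : SPTree n, T.valid (polytopeOf S) ∧ T.pathlike (polytopeOf S) ∧
      T.size ≤ π.length := by
  classical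
  obtain ⟨hlast, hlines⟩ := hπ
  -- Key soundness fact: each CP line is "almost satisfied" (strictly beyond b-1)
  -- by any point of the polytope satisfying all previous lines.
  have key : ∀ (i : Fin π.length) (x : Fin n → ℝ), x ∈ polytopeOf S →
      (∀ j : Fin π.length, (j : ℕ) < (i : ℕ) →
        dotIR (π.get j).a x ≥ ((π.get j).b : ℝ)) →
      dotIR (π.get i).a x > ((π.get i).b : ℝ) - 1 := by
    intro i x hx hprev
    rcases hlines i with hax | ⟨j, k, hj, hk, α, β, hα, hβ, ha, hb⟩ | ⟨j, hj, d, hd, ha, hb⟩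
    · have := hx _ hax
      simp only [LinIneq.sat] at this
      linarith
    · have hdj := hprev j hj
      have hdk := hprev k hk
      have hsum : dotIR (π.get i).a x =
          (α : ℝ) * dotIR (π.get j).a x + (β : ℝ) * dotIR (π.get k).a x := by
        simp only [dotIR, Finset.mul_sum, ← Finset.sum_add_distrib]
        refine Finset.sum_congr rfl fun t _ => ?_
        rw [ha t]; push_cast; ring
      have h1 : (α : ℝ) * ((π.get j).b : ℝ) ≤ (α : ℝ) * dotIR (π.get j).a x :=
        mul_le_mul_of_nonneg_left hdj (by exact_mod_cast hα)
      have h2 : (β : ℝ) * ((π.get k).b : ℝ) ≤ (β : ℝ) * dotIR (π.get k).a x :=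
        mul_le_mul_of_nonneg_left hdk (by exact_mod_cast hβ)
      rw [hsum, hb]
      push_cast
      linarith
    · have hdj := hprev j hj
      have hsum : dotIR (π.get j).a x = (d : ℝ) * dotIR (π.get i).a x := by
        simp only [dotIR, Finset.mul_sum]
        refine Finset.sum_congr rfl fun t _ => ?_
        rw [ha t]; push_cast; ring
      have hd' : (0 : ℝ) < (d : ℝ) := by exact_mod_cast hd
      have hdiv : ((π.get j).b : ℝ) / (d : ℝ) ≤ dotIR (π.get i).a x := by
        rw [div_le_iff₀ hd']
        nlinarith [hsum ▸ hdj]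
      have hceil : ((π.get i).b : ℝ) - 1 < ((π.get j).b : ℝ) / (d : ℝ) := by
        have h1 : (⌈((π.get j).b : ℚ) / (d : ℚ)⌉ : ℚ) < ((π.get j).b : ℚ) / (d : ℚ) + 1 :=
          Int.ceil_lt_add_one _
        rw [hb]
        have h2 : ((⌈((π.get j).b : ℚ) / (d : ℚ)⌉ : ℚ) : ℝ) <
            ((((π.get j).b : ℚ) / (d : ℚ) + 1 : ℚ) : ℝ) := by exact_mod_cast h1
        push_cast at h2 ⊢
        linarith
      linarith
  -- The polytope after processing the first k lines.
  set Q : ℕ → Set (Fin n → ℝ) := fun k =>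
    {x | x ∈ polytopeOf S ∧ ∀ j : Fin π.length, (j : ℕ) < k →
      dotIR (π.get j).a x ≥ ((π.get j).b : ℝ)} with hQ
  have hQ0 : Q 0 = polytopeOf S := by
    ext x; simp [hQ]
  have hQsucc : ∀ (k : ℕ) (hk : k < π.length),
      Q k ∩ geSet (π.get ⟨k, hk⟩).a (π.get ⟨k, hk⟩).b = Q (k + 1) := by
    intro k hk
    ext x
    simp only [hQ, Set.mem_inter_iff, Set.mem_setOf_eq, geSet]
    constructor
    · rintro ⟨⟨hx, hall⟩, hge⟩
      refine ⟨hx, fun j hj => ?_⟩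
      rcases Nat.lt_succ_iff_lt_or_eq.mp hj with h | h
      · exact hall j h
      · have : j = ⟨k, hk⟩ := Fin.ext h
        rw [this]; exact hge
    · rintro ⟨hx, hall⟩
      exact ⟨⟨hx, fun j hj => hall j (Nat.lt_succ_of_lt hj)⟩,
        hall ⟨k, hk⟩ (Nat.lt_succ_self k)⟩
  -- The final polytope is empty, thanks to the last line 0 ≥ 1.
  have hne : π ≠ [] := by
    intro h; rw [h] at hlast; simp at hlast
  have hQlast : Q π.length = ∅ := by
    have hlen : π.length - 1 < π.length := Nat.sub_lt (List.length_pos_iff.mpr hne) one_pos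
    have hget : π.get ⟨π.length - 1, hlen⟩ = ⟨fun _ => 0, 1⟩ := by
      have h1 : π.getLast hne = ⟨fun _ => 0, 1⟩ := by
        have := List.getLast?_eq_getLast (l := π) hne
        rw [this] at hlast
        exact Option.some_injective _ hlast
      rw [← h1]
      exact (List.getLast_eq_getElem hne).symm
    ext x
    simp only [hQ, Set.mem_setOf_eq, Set.mem_empty_iff_false, iff_false]
    rintro ⟨hx, hall⟩
    have := hall ⟨π.length - 1, hlen⟩ hlen
    rw [hget] at this
    simp only [dotIR] at this
    norm_num at this
  -- goodChain for every suffix.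
  have good : ∀ (m k : ℕ), k + m = π.length →
      CPtoSP.goodChain (π.drop k) (Q k) := by
    intro m
    induction m with
    | zero =>
      intro k hk
      rw [Nat.add_zero] at hk
      subst hk
      rw [List.drop_length]
      exact hQlast
    | succ m ih =>
      intro k hk
      have hklt : k < π.length := by omega
      have hdrop : π.drop k = π.get ⟨k, hklt⟩ :: π.drop (k + 1) := by
        rw [List.drop_eq_getElem_cons hklt]
        rfl
      rw [hdrop]
      refine ⟨?_, ?_⟩
      · ext x
        simp only [Set.mem_inter_iff, Set.mem_empty_iff_false, iff_false, not_and]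
        intro hxQ hxle
        obtain ⟨hx, hall⟩ := hxQ
        have := key ⟨k, hklt⟩ x hx (fun j hj => hall j hj)
        simp only [leSet, Set.mem_setOf_eq] at hxle
        linarith
      · rw [hQsucc k hklt]
        exact ih (k + 1) (by omega)
  have hgood : CPtoSP.goodChain π (polytopeOf S) := by
    have := good π.length 0 (by omega)
    rw [List.drop_zero, hQ0] at this
    exact this
  exact ⟨CPtoSP.chain π, CPtoSP.chain_valid π _ hgood,
    CPtoSP.chain_pathlike π _ hgood, le_of_eq (CPtoSP.chain_size π)⟩
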